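/- Fix λ > 1 and d ∈ ℝ. For y > 0 let φ(y,d) denote the unique solution x ∈ (|d|/y, ∞) of the criticality equation L + M y²/√(x²y²−d²) = 2√(A(x,y,d)). Then y ↦ φ(y,d) is monotonically nonincreasing: if 0 < y₁ ≤ y₂ then φ(y₂,d) ≤ φ(y₁,d). -/

import Mathlib

noncomputable section

def Afun (l x y d : ℝ) : ℝ :=
  (x ^ 2 + y ^ 2) * (l ^ 2 + 1 / l ^ 2) / 2
    + (l ^ 2 - 1 / l ^ 2) * Real.sqrt (x ^ 2 * y ^ 2 - d ^ 2) + 2 * d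

set_option maxHeartbeats 1000000 in
lemma crux (L M p t₁ t₂ d : ℝ) (hL : 2 < L) (hM : 0 < M) (hLM : L^2 = M^2 + 4)
    (hp : 0 < p) (ht₁ : 0 < t₁) (ht : t₁ ≤ t₂)
    (heq : L * (L*p*t₁ + M*t₁^2 + M*d^2)^2
      = 2*p*t₁^2*((L*t₁+M*p)^2 + (L*d+2*p)^2)) :
    L * (L*p*t₂ + M*t₂^2 + M*d^2)^2
      ≤ 2*p*t₂^2*((L*t₂+M*p)^2 + (L*d+2*p)^2) := by
  have ht₂ : 0 < t₂ := lt_of_lt_of_le ht₁ ht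
  have hL0 : (0:ℝ) < L := by linarith
  have hd2 : (0:ℝ) ≤ d^2 := sq_nonneg d
  set a₁ : ℝ := L*t₁+M*p with ha₁
  set a₂ : ℝ := L*t₂+M*p with ha₂
  set w : ℝ := L*d+2*p with hw
  set r₁ : ℝ := L*p*t₁ + M*t₁^2 + M*d^2 with hr₁
  set r₂ : ℝ := L*p*t₂ + M*t₂^2 + M*d^2 with hr₂
  have hr₁0 : 0 < r₁ := by
    have h1 : 0 < L*p*t₁ := by positivity
    have h2 : 0 < M*t₁^2 := by positivity
    have h3 : 0 ≤ M*d^2 := by positivity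
    rw [hr₁]; linarith
  have hr₂0 : 0 < r₂ := by
    have h1 : 0 < L*p*t₂ := by positivity
    have h2 : 0 < M*t₂^2 := by positivity
    have h3 : 0 ≤ M*d^2 := by positivity
    rw [hr₂]; linarith
  have ha₁0 : 0 < a₁ := by have h1 : 0 < L*t₁ := by positivity
                           have h2 : 0 < M*p := by positivity
                           rw [ha₁]; linarith
  have ha₂0 : 0 < a₂ := by have h1 : 0 < L*t₂ := by positivity
                           have h2 : 0 < M*p := by positivity
                           rw [ha₂]; linarith
  have hB₁0 : 0 < a₁^2 + w^2 := by positivity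
  have hK0 : 0 < a₁*a₂ + w^2 := by nlinarith [mul_pos ha₁0 ha₂0, sq_nonneg w]
  have hC : 0 ≤ a₁*((L^2-M^2)*p*t₁*t₂ + L*M*d^2*(t₁+t₂) + M^2*p*d^2)
      + M*w^2*(d^2 - t₁*t₂) := by
    have hid : a₁*((L^2-M^2)*p*t₁*t₂ + L*M*d^2*(t₁+t₂) + M^2*p*d^2)
        + M*w^2*(d^2 - t₁*t₂)
        = L*p*t₂*(2*t₁-M*d)^2 + L*M*d^2*((L-2)*(p^2+d^2) + 2*(p+d)^2)
          + L^2*M*d^2*t₁^2 + 2*L*M^2*p*d^2*t₁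
          + (L^2-M^2-4)*(a₁*p*t₁*t₂ - M*p^2*d^2) := by
      rw [ha₁, hw]; ring
    have h4 : L^2-M^2-4 = 0 := by linarith
    rw [hid, h4]
    have c1 : 0 ≤ L*p*t₂*(2*t₁-M*d)^2 := by positivity
    have c2 : 0 ≤ L*M*d^2*((L-2)*(p^2+d^2) + 2*(p+d)^2) := by
      have h5 : 0 ≤ (L-2)*(p^2+d^2) + 2*(p+d)^2 := by
        have h6 : 0 ≤ (L-2)*(p^2+d^2) :=
          mul_nonneg (by linarith) (by positivity)
        nlinarith [sq_nonneg (p+d)]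
      have h7 : 0 ≤ L*M*d^2 := by positivity
      exact mul_nonneg h7 h5
    have c3 : 0 ≤ L^2*M*d^2*t₁^2 := by positivity
    have c4 : 0 ≤ 2*L*M^2*p*d^2*t₁ := by positivity
    linarith
  have hW : t₁*((a₁^2+w^2)*r₂) ≤ t₂*((a₁*a₂+w^2)*r₁) := by
    have hid2 : t₂*((a₁*a₂+w^2)*r₁) - t₁*((a₁^2+w^2)*r₂)
        = (t₂-t₁)*(a₁*((L^2-M^2)*p*t₁*t₂ + L*M*d^2*(t₁+t₂) + M^2*p*d^2)
            + M*w^2*(d^2 - t₁*t₂)) := by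
      rw [ha₁, ha₂, hw, hr₁, hr₂]; ring
    have h8 := mul_nonneg (sub_nonneg.2 ht) hC
    linarith [hid2, h8]
  have hW2 : L*r₁*r₂ ≤ 2*p*t₁*t₂*(a₁*a₂+w^2) := by
    have e1 : L*r₁*r₂*r₁ = 2*p*t₁*(t₁*((a₁^2+w^2)*r₂)) := by
      linear_combination r₂ * heq
    have h6 : 2*p*t₁*(t₁*((a₁^2+w^2)*r₂)) ≤ 2*p*t₁*(t₂*((a₁*a₂+w^2)*r₁)) :=
      mul_le_mul_of_nonneg_left hW (by positivity)
    have h5 : L*r₁*r₂*r₁ ≤ 2*p*t₁*t₂*(a₁*a₂+w^2)*r₁ := by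
      have e2 : 2*p*t₁*(t₂*((a₁*a₂+w^2)*r₁)) = 2*p*t₁*t₂*(a₁*a₂+w^2)*r₁ := by ring
      linarith [e1, h6, e2]
    exact le_of_mul_le_mul_right h5 hr₁0
  have hCS : (a₁*a₂+w^2)^2 ≤ (a₁^2+w^2)*(a₂^2+w^2) := by
    nlinarith [sq_nonneg (w*(a₁-a₂))]
  have hsq : (L*r₁*r₂)^2 ≤ (2*p*t₁*t₂*(a₁*a₂+w^2))^2 := by
    have h0 : 0 ≤ L*r₁*r₂ := by positivity
    exact pow_le_pow_left₀ h0 hW2 2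
  have h6' : (2*p*t₁*t₂)^2*(a₁*a₂+w^2)^2 ≤ (2*p*t₁*t₂)^2*((a₁^2+w^2)*(a₂^2+w^2)) :=
    mul_le_mul_of_nonneg_left hCS (by positivity)
  have h7 : (2*p*t₁^2*(a₁^2+w^2))*(L*r₂^2)
      ≤ (2*p*t₁^2*(a₁^2+w^2))*(2*p*t₂^2*(a₂^2+w^2)) := by
    have e1 : (2*p*t₁^2*(a₁^2+w^2))*(L*r₂^2) = (L*r₁*r₂)^2 := by
      linear_combination (-(L*r₂^2)) * heq
    have e2 : (2*p*t₁*t₂*(a₁*a₂+w^2))^2 = (2*p*t₁*t₂)^2*(a₁*a₂+w^2)^2 := by ring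
    have e3 : (2*p*t₁*t₂)^2*((a₁^2+w^2)*(a₂^2+w^2))
        = (2*p*t₁^2*(a₁^2+w^2))*(2*p*t₂^2*(a₂^2+w^2)) := by ring
    linarith [hsq, h6', e1, e2, e3]
  have hpos : 0 < 2*p*t₁^2*(a₁^2+w^2) := by positivity
  exact le_of_mul_le_mul_left h7 hpos

set_option maxHeartbeats 2000000 in
/-- If `φ(y,d)` denotes, for each `y > 0`, the unique solution `x ∈ (|d|/y, ∞)` of
the criticality equation `L + M y²/√(x²y²−d²) = 2√(A(x,y,d))`, then `y ↦ φ(y,d)`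
is monotonically nonincreasing. -/
theorem phi_antitone (l : ℝ) (hl : 1 < l) (d : ℝ) (φ : ℝ → ℝ → ℝ)
    (hφ : ∀ y : ℝ, 0 < y →
      |d| / y < φ y d ∧
      (l ^ 2 + 1 / l ^ 2)
          + (l ^ 2 - 1 / l ^ 2) * y ^ 2 / Real.sqrt ((φ y d) ^ 2 * y ^ 2 - d ^ 2)
        = 2 * Real.sqrt (Afun l (φ y d) y d)) :
    ∀ y₁ y₂ : ℝ, 0 < y₁ → y₁ ≤ y₂ → φ y₂ d ≤ φ y₁ d := by
  intro y₁ y₂ hy₁ hle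
  by_contra hcon
  push_neg at hcon
  have hy₂ : 0 < y₂ := lt_of_lt_of_le hy₁ hle
  obtain ⟨hb₁, he₁⟩ := hφ y₁ hy₁
  obtain ⟨hb₂, he₂⟩ := hφ y₂ hy₂
  have hl0 : (0:ℝ) < l := lt_trans one_pos hl
  have hlne : l ≠ 0 := ne_of_gt hl0
  have hl2 : (1:ℝ) < l^2 := by nlinarith
  set L : ℝ := l ^ 2 + 1 / l ^ 2 with hLdef
  set M : ℝ := l ^ 2 - 1 / l ^ 2 with hMdef
  have hinv : 0 < 1/l^2 := by positivity
  have hinv1 : 1/l^2 < 1 := by rw [div_lt_one (by positivity)]; exact hl2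
  have hM : 0 < M := by rw [hMdef]; linarith
  have hL : 2 < L := by
    rw [hLdef]
    have h1 : 0 < (l - 1/l)^2 := by
      have : 1/l < l := by
        rw [div_lt_iff₀ hl0]; nlinarith
      have hne : l - 1/l > 0 := by linarith
      positivity
    have h2 : (l - 1/l)^2 = l^2 - 2 + 1/l^2 := by field_simp; ring
    linarith
  have hL0 : (0:ℝ) < L := by linarith
  have hLM : L^2 = M^2 + 4 := by rw [hLdef, hMdef]; field_simp; ring
  set x₁ : ℝ := φ y₁ d with hx₁def
  set x₂ : ℝ := φ y₂ d with hx₂def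
  have hx₁ : 0 < x₁ := lt_of_le_of_lt (div_nonneg (abs_nonneg d) hy₁.le) hb₁
  have hx₂ : 0 < x₂ := lt_of_le_of_lt (div_nonneg (abs_nonneg d) hy₂.le) hb₂
  have habs₁ : |d| < x₁ * y₁ := (div_lt_iff₀ hy₁).1 hb₁
  have habs₂ : |d| < x₂ * y₂ := (div_lt_iff₀ hy₂).1 hb₂
  have hd₁ : d^2 < x₁^2 * y₁^2 := by nlinarith [sq_abs d, abs_nonneg d]
  have hy2sq : y₁^2 ≤ y₂^2 := by nlinarith
  have hd₁₂ : d^2 < x₁^2 * y₂^2 := by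
    have h9 : x₁^2*y₁^2 ≤ x₁^2*y₂^2 := mul_le_mul_of_nonneg_left hy2sq (sq_nonneg x₁)
    linarith
  have hd₂₂ : d^2 < x₂^2 * y₂^2 := by nlinarith [sq_abs d, abs_nonneg d]
  set t₁ : ℝ := Real.sqrt (x₁ ^ 2 * y₁ ^ 2 - d ^ 2) with ht₁def
  set t₂ : ℝ := Real.sqrt (x₁ ^ 2 * y₂ ^ 2 - d ^ 2) with ht₂def
  set s₂ : ℝ := Real.sqrt (x₂ ^ 2 * y₂ ^ 2 - d ^ 2) with hs₂def
  have ht₁ : 0 < t₁ := Real.sqrt_pos.2 (by linarith)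
  have ht₂ : 0 < t₂ := Real.sqrt_pos.2 (by linarith)
  have ht₁t₂ : t₁ ≤ t₂ := by
    rw [ht₁def, ht₂def]
    apply Real.sqrt_le_sqrt
    have h9 : x₁^2*y₁^2 ≤ x₁^2*y₂^2 := mul_le_mul_of_nonneg_left hy2sq (sq_nonneg x₁)
    linarith
  have ht₂s₂ : t₂ < s₂ := by
    rw [ht₂def, hs₂def]
    apply Real.sqrt_lt_sqrt (by linarith)
    have hx2sq : x₁^2 < x₂^2 := by nlinarith only [hx₁, hx₂, hcon]
    have h9 := mul_lt_mul_of_pos_right hx2sq (pow_pos hy₂ 2)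
    linarith only [h9]
  have ht₁sq : t₁^2 = x₁^2*y₁^2 - d^2 := Real.sq_sqrt (by linarith)
  have ht₂sq : t₂^2 = x₁^2*y₂^2 - d^2 := Real.sq_sqrt (by linarith)
  have hq₁ : x₁^2*y₁^2 = t₁^2 + d^2 := by linarith
  have hq₂ : x₁^2*y₂^2 = t₂^2 + d^2 := by linarith
  -- Step 1 : strict monotonicity in x at level y₂
  have hA12 : Afun l x₁ y₂ d = (x₁^2 + y₂^2)*L/2 + M*t₂ + 2*d := by
    simp only [Afun]; rfl
  have hA22 : Afun l x₂ y₂ d = (x₂^2 + y₂^2)*L/2 + M*s₂ + 2*d := by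
    simp only [Afun]; rfl
  have hA11 : Afun l x₁ y₁ d = (x₁^2 + y₁^2)*L/2 + M*t₁ + 2*d := by
    simp only [Afun]; rfl
  clear_value L M x₁ x₂ t₁ t₂ s₂
  have hAle : Afun l x₁ y₂ d ≤ Afun l x₂ y₂ d := by
    rw [hA12, hA22]
    have h1 : x₁^2 < x₂^2 := by nlinarith only [hx₁, hx₂, hcon]
    have h2 : M*t₂ ≤ M*s₂ := mul_le_mul_of_nonneg_left ht₂s₂.le hM.le
    have h3 : (x₁^2 + y₂^2)*L/2 ≤ (x₂^2 + y₂^2)*L/2 := by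
      have h4 : x₁^2 + y₂^2 ≤ x₂^2 + y₂^2 := by linarith only [h1]
      have h5 := mul_le_mul_of_nonneg_right h4 hL0.le
      linarith only [h5]
    linarith only [h2, h3]
  have keyIneq : 2 * Real.sqrt (Afun l x₁ y₂ d) < L + M * y₂ ^ 2 / t₂ := by
    have h1 : Real.sqrt (Afun l x₁ y₂ d) ≤ Real.sqrt (Afun l x₂ y₂ d) :=
      Real.sqrt_le_sqrt hAle
    have h2 : M * y₂ ^ 2 / s₂ < M * y₂ ^ 2 / t₂ :=
      div_lt_div_of_pos_left (by positivity) ht₂ ht₂s₂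
    linarith only [he₂, h1, h2]
  -- Step 2 : convert equation at (x₁, y₁) to polynomial form
  have hA11nn : 0 ≤ Afun l x₁ y₁ d := by
    by_contra hneg
    push_neg at hneg
    have h0 : Real.sqrt (Afun l x₁ y₁ d) = 0 := Real.sqrt_eq_zero'.2 (by linarith [hneg])
    rw [h0] at he₁
    have hpos' : 0 < M*y₁^2/t₁ := by positivity
    rw [mul_zero] at he₁
    linarith [he₁]
  have hsq1 : (L*t₁ + M*y₁^2)^2 = 4*((x₁^2 + y₁^2)*L/2 + M*t₁ + 2*d)*t₁^2 := by
    have e2 : (L + M*y₁^2/t₁)^2 = 4*(Afun l x₁ y₁ d) := by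
      rw [he₁, mul_pow, Real.sq_sqrt hA11nn]; norm_num
    have e1 : L*t₁ + M*y₁^2 = (L + M*y₁^2/t₁)*t₁ := by field_simp
    rw [e1, mul_pow, e2, hA11]
  have heqpoly : L*(L*x₁^2*t₁ + M*t₁^2 + M*d^2)^2
      = 2*x₁^2*t₁^2*((L*t₁+M*x₁^2)^2 + (L*d+2*x₁^2)^2) := by
    linear_combination (L*x₁^2*x₁^2) * hsq1
      + (-(L*M*(2*x₁^2*(L*t₁+M*y₁^2) + M*(t₁^2+d^2-x₁^2*y₁^2)) - 2*L^2*x₁^2*t₁^2)) * hq₁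
      + (2*x₁^2*x₁^2*x₁^2*t₁^2) * hLM
  -- apply the crux lemma
  have ccl := crux L M (x₁^2) t₁ t₂ d hL hM hLM (by positivity) ht₁ ht₁t₂ heqpoly
  -- convert back at (x₁, y₂)
  have e3 : L*(L*x₁^2*t₂ + M*t₂^2 + M*d^2)^2
      = L*(x₁^2*x₁^2)*(L*t₂ + M*y₂^2)^2 := by
    linear_combination
      (-(L*M*((L*x₁^2*t₂+M*t₂^2+M*d^2) + x₁^2*(L*t₂+M*y₂^2)))) * hq₂
  have e4 : 2*x₁^2*t₂^2*((L*t₂+M*x₁^2)^2 + (L*d+2*x₁^2)^2)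
      = 4*L*(x₁^2*x₁^2)*(((x₁^2 + y₂^2)*L/2 + M*t₂ + 2*d)*t₂^2) := by
    linear_combination (-(2*x₁^2*t₂^2*L^2)) * hq₂
      + (-(2*x₁^2*t₂^2*x₁^2*x₁^2)) * hLM
  have h6 : (L*(x₁^2*x₁^2))*((L*t₂ + M*y₂^2)^2)
      ≤ (L*(x₁^2*x₁^2))*(4*(((x₁^2 + y₂^2)*L/2 + M*t₂ + 2*d)*t₂^2)) := by
    calc (L*(x₁^2*x₁^2))*((L*t₂ + M*y₂^2)^2)
        = L*(L*x₁^2*t₂ + M*t₂^2 + M*d^2)^2 := by linear_combination -e3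
      _ ≤ 2*x₁^2*t₂^2*((L*t₂+M*x₁^2)^2 + (L*d+2*x₁^2)^2) := ccl
      _ = (L*(x₁^2*x₁^2))*(4*(((x₁^2 + y₂^2)*L/2 + M*t₂ + 2*d)*t₂^2)) := by
          linear_combination e4
  have h7 : (L*t₂ + M*y₂^2)^2 ≤ 4*(((x₁^2 + y₂^2)*L/2 + M*t₂ + 2*d)*t₂^2) :=
    le_of_mul_le_mul_left h6 (by positivity)
  have hfin2 : (L + M*y₂^2/t₂)^2 ≤ 4*(Afun l x₁ y₂ d) := by
    rw [hA12]
    have e1 : L + M*y₂^2/t₂ = (L*t₂ + M*y₂^2)/t₂ := by field_simp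
    rw [e1, div_pow, div_le_iff₀ (by positivity)]
    exact le_trans h7 (le_of_eq (by ring))
  have hlhs : 0 < L + M*y₂^2/t₂ := by
    have : 0 < M*y₂^2/t₂ := by positivity
    linarith
  have hA12nn : 0 ≤ Afun l x₁ y₂ d := by nlinarith only [hfin2, sq_nonneg (L + M*y₂^2/t₂)]
  have hfinal : L + M*y₂^2/t₂ ≤ 2*Real.sqrt (Afun l x₁ y₂ d) := by
    have h1 : L + M*y₂^2/t₂ = Real.sqrt ((L + M*y₂^2/t₂)^2) :=
      (Real.sqrt_sq hlhs.le).symm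
    rw [h1]
    have h2 : Real.sqrt ((L + M*y₂^2/t₂)^2) ≤ Real.sqrt (4*(Afun l x₁ y₂ d)) :=
      Real.sqrt_le_sqrt hfin2
    have h3 : Real.sqrt (4*(Afun l x₁ y₂ d)) = 2*Real.sqrt (Afun l x₁ y₂ d) := by
      rw [show (4:ℝ)*(Afun l x₁ y₂ d) = 2^2*(Afun l x₁ y₂ d) by ring,
        Real.sqrt_mul (by positivity) , Real.sqrt_sq (by norm_num)]
    linarith only [h2, h3]
  linarith only [keyIneq, hfinal]
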